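/- arXiv:2604.20351 — 2 statements merged into one kernel-verified Lean document; each statement's English description precedes it below -/
import Mathlib

section
/- Let B be a set of nodes of odd cardinality with a matching M on the induced subgraph G[B] of cardinality (|B|−1)/2, so that B has a unique M-unmatched node r (the receptacle), and suppose every node v ∈ B \ {r} has both an even-length and an odd-length M-alternating path to r within G[B] (cherry blossom property). Then for every node u ∈ B there exists a matching M' on G[B] of cardinality (|B|−1)/2 whose unique unmatched node is u. -/
open Finset

def IsMatchingS {V : Type*} [DecidableEq V] (M : Finset (Sym2 V)) : Prop :=
  (∀ e ∈ M, ¬ e.IsDiag) ∧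
  (∀ e ∈ M, ∀ f ∈ M, e ≠ f → ∀ v : V, v ∈ e → v ∉ f)

def pathEdges {V : Type*} (l : List V) : List (Sym2 V) :=
  List.zipWith (fun a b => s(a, b)) l l.tail

/-- A simple path whose edges lie in `Eg` and alternate w.r.t. the matching `M`;
if `startMatched` is `true` the first edge is matched (edges at even positions are
matched), otherwise the first edge is unmatched. -/
def IsAltPath {V : Type*} [DecidableEq V] (Eg M : Finset (Sym2 V))
    (startMatched : Bool) (l : List V) : Prop :=
  l.Nodup ∧ (∀ e ∈ pathEdges l, e ∈ Eg) ∧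
  ∀ i (hi : i < (pathEdges l).length),
    ((pathEdges l)[i]'hi ∈ M ↔ (Even i ↔ startMatched = true))

/-- There is an even-length `M`-alternating path from `v` to `r` inside `B`,
starting (at `v`) with a matched edge. -/
def EvenAltPathIn {V : Type*} [DecidableEq V] (Eg M : Finset (Sym2 V))
    (B : Finset V) (v r : V) : Prop :=
  ∃ l : List V, IsAltPath Eg M true l ∧ (∀ x ∈ l, x ∈ B) ∧
    l.head? = some v ∧ l.getLast? = some r ∧ Even (l.length - 1)

/-- There is an odd-length `M`-alternating path from `v` to `r` inside `B`,
starting (at `v`) with an unmatched edge. -/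
def OddAltPathIn {V : Type*} [DecidableEq V] (Eg M : Finset (Sym2 V))
    (B : Finset V) (v r : V) : Prop :=
  ∃ l : List V, IsAltPath Eg M false l ∧ (∀ x ∈ l, x ∈ B) ∧
    l.head? = some v ∧ l.getLast? = some r ∧ Odd (l.length - 1)

section Aux

variable {V : Type*} [DecidableEq V]

lemma pathEdges_length (l : List V) : (pathEdges l).length = l.length - 1 := by
  rw [pathEdges, List.length_zipWith, List.length_tail]
  exact Nat.min_eq_right (Nat.sub_le _ _)

lemma pathEdges_getElem (l : List V) (i : ℕ) (h : i + 1 < l.length) :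
    (pathEdges l)[i]'(by rw [pathEdges_length]; omega) =
      s(l[i]'(by omega), l[i+1]'h) := by
  simp [pathEdges, List.getElem_zipWith, List.getElem_tail]

lemma mem_pathEdges_iff {l : List V} {e : Sym2 V} :
    e ∈ pathEdges l ↔ ∃ i, ∃ h : i + 1 < l.length,
      e = s(l[i]'(by omega), l[i+1]'h) := by
  rw [List.mem_iff_getElem]
  constructor
  · rintro ⟨i, hi, rfl⟩
    have h : i + 1 < l.length := by have := pathEdges_length l; omega
    exact ⟨i, h, pathEdges_getElem l i h⟩
  · rintro ⟨i, h, rfl⟩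
    exact ⟨i, by rw [pathEdges_length]; omega, pathEdges_getElem l i h⟩

lemma getElem_idx_congr {l : List V} {i j : ℕ} (h : i = j) (hi : i < l.length) :
    l[i]'hi = l[j]'(h ▸ hi) := by subst h; rfl

/-- The vertex set of an edge, as a finset. -/
def evset : Sym2 V → Finset V :=
  Sym2.lift ⟨fun a b => ({a, b} : Finset V), fun a b => Finset.pair_comm a b⟩

lemma mem_evset {x : V} {e : Sym2 V} : x ∈ evset e ↔ x ∈ e := by
  induction e using Sym2.inductionOn with
  | _ a b => simp [evset, Sym2.mem_iff]

lemma card_evset {e : Sym2 V} (h : ¬ e.IsDiag) : (evset e).card = 2 := by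
  induction e using Sym2.inductionOn with
  | _ a b =>
    rw [Sym2.mk_isDiag_iff] at h
    simp only [evset, Sym2.lift_mk]
    exact Finset.card_pair h

lemma matching_card_of_cover (M' : Finset (Sym2 V)) (B : Finset V) (u : V)
    (huB : u ∈ B) (hM : IsMatchingS M')
    (hB : ∀ e ∈ M', ∀ x : V, x ∈ e → x ∈ B)
    (hfree : ∀ e ∈ M', u ∉ e)
    (hcov : ∀ v ∈ B, v ≠ u → ∃ e ∈ M', v ∈ e) :
    2 * M'.card + 1 = B.card := by
  have hbu : B.erase u = M'.biUnion evset := by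
    ext x
    simp only [Finset.mem_erase, Finset.mem_biUnion]
    constructor
    · rintro ⟨hxu, hxB⟩
      obtain ⟨e, he, hxe⟩ := hcov x hxB hxu
      exact ⟨e, he, mem_evset.2 hxe⟩
    · rintro ⟨e, he, hxe⟩
      rw [mem_evset] at hxe
      exact ⟨fun h => hfree e he (h ▸ hxe), hB e he x hxe⟩
  have hdisj : ∀ e ∈ M', ∀ f ∈ M', e ≠ f → Disjoint (evset e) (evset f) := by
    intro e he f hf hef
    rw [Finset.disjoint_left]
    intro x hxe hxf
    exact hM.2 e he f hf hef x (mem_evset.1 hxe) (mem_evset.1 hxf)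
  have hc : (B.erase u).card = 2 * M'.card := by
    rw [hbu, Finset.card_biUnion hdisj,
      Finset.sum_congr rfl (fun e he => card_evset (hM.1 e he)),
      Finset.sum_const, smul_eq_mul, Nat.mul_comm]
  have h1 := Finset.card_erase_of_mem huB
  have hb1 : 1 ≤ B.card := Finset.card_pos.2 ⟨u, huB⟩
  omega

lemma swap_lemma (Eg : Finset (Sym2 V)) (B : Finset V) (r : V)
    (M : Finset (Sym2 V)) (hM : IsMatchingS M)
    (hMB : ∀ e ∈ M, ∀ x : V, x ∈ e → x ∈ B)
    (hrfree : ∀ e ∈ M, r ∉ e)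
    (hcov : ∀ v ∈ B, v ≠ r → ∃ e ∈ M, v ∈ e)
    (u : V) (hur : u ≠ r)
    (l : List V) (hap : IsAltPath Eg M true l) (hlB : ∀ x ∈ l, x ∈ B)
    (hhead : l.head? = some u) (hlast : l.getLast? = some r)
    (heven : Even (l.length - 1)) :
    ∃ M' : Finset (Sym2 V),
      (M' ⊆ M ∪ (pathEdges l).toFinset) ∧
      (∀ e ∈ M', ∀ x : V, x ∈ e → x ∈ B) ∧ IsMatchingS M' ∧
      (∀ e ∈ M', u ∉ e) ∧ (∀ v ∈ B, v ≠ u → ∃ e ∈ M', v ∈ e) := by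
  obtain ⟨hnd, hEgP, halt⟩ := hap
  have hne : l ≠ [] := by rintro rfl; simp at hhead
  have hlpos : 0 < l.length := List.length_pos_iff.2 hne
  rw [List.getLast?_eq_getLast hne, Option.some_inj,
    List.getLast_eq_getElem] at hlast
  have h0 : l[0]'hlpos = u := by
    rw [List.head?_eq_head hne, Option.some_inj] at hhead
    rw [← hhead, List.head_eq_getElem]
  have hinj : ∀ {i j : ℕ} (hi : i < l.length) (hj : j < l.length),
      l[i]'hi = l[j]'hj → i = j := by
    intro i j hi hj h
    exact (hnd.getElem_inj_iff).1 h
  have hMiff : ∀ (i : ℕ) (h : i + 1 < l.length),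
      (s(l[i]'(by omega), l[i+1]'h) ∈ M ↔ Even i) := by
    intro i h
    have hi : i < (pathEdges l).length := by rw [pathEdges_length]; omega
    have h2 := halt i hi
    rw [pathEdges_getElem l i h] at h2
    simpa using h2
  set P : Finset (Sym2 V) := (pathEdges l).toFinset with hP
  have hPmem : ∀ {e : Sym2 V}, e ∈ P ↔ ∃ i, ∃ h : i + 1 < l.length,
      e = s(l[i]'(by omega), l[i+1]'h) := by
    intro e; rw [hP, List.mem_toFinset, mem_pathEdges_iff]
  have hMeq : ∀ e ∈ M, ∀ f ∈ M, ∀ v : V, v ∈ e → v ∈ f → e = f := by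
    intro e he f hf v hv hv'
    by_contra h
    exact hM.2 e he f hf h v hv hv'
  -- every matched edge touching the path lies on the path
  have hinP : ∀ e ∈ M, ∀ (p : ℕ) (hp : p < l.length), l[p]'hp ∈ e → e ∈ P := by
    intro e he p hp hpe
    rcases Nat.even_or_odd p with hpar | hpar
    · by_cases hp1 : p + 1 < l.length
      · have hm : s(l[p]'hp, l[p+1]'hp1) ∈ M := (hMiff p hp1).2 hpar
        have heq : e = s(l[p]'hp, l[p+1]'hp1) :=
          hMeq e he _ hm (l[p]'hp) hpe (Sym2.mem_iff.2 (Or.inl rfl))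
        rw [heq]; exact hPmem.2 ⟨p, hp1, rfl⟩
      · exfalso
        have hpl : p = l.length - 1 := by omega
        have hr : l[p]'hp = r := by
          rw [getElem_idx_congr hpl]; exact hlast
        exact hrfree e he (hr ▸ hpe)
    · rcases hpar with ⟨k, hk⟩
      obtain ⟨i, rfl⟩ : ∃ i, p = i + 1 := ⟨p - 1, by omega⟩
      have hieven : Even i := ⟨k, by omega⟩
      have hm : s(l[i]'(by omega), l[i+1]'hp) ∈ M := (hMiff i hp).2 hieven
      have heq : e = s(l[i]'(by omega), l[i+1]'hp) :=
        hMeq e he _ hm (l[i+1]'hp) hpe (Sym2.mem_iff.2 (Or.inr rfl))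
      rw [heq]; exact hPmem.2 ⟨i, hp, rfl⟩
  refine ⟨(M \ P) ∪ (P \ M), ?_, ?_, ⟨?_, ?_⟩, ?_, ?_⟩
  · exact Finset.union_subset
      (Finset.sdiff_subset.trans Finset.subset_union_left)
      (Finset.sdiff_subset.trans Finset.subset_union_right)
  · intro e he x hx
    rcases Finset.mem_union.1 he with h | h
    · exact hMB e (Finset.mem_sdiff.1 h).1 x hx
    · obtain ⟨i, hb, rfl⟩ := hPmem.1 (Finset.mem_sdiff.1 h).1
      rcases Sym2.mem_iff.1 hx with rfl | rfl
      · exact hlB _ (List.getElem_mem _)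
      · exact hlB _ (List.getElem_mem _)
  · intro e he
    rcases Finset.mem_union.1 he with h | h
    · exact hM.1 e (Finset.mem_sdiff.1 h).1
    · obtain ⟨i, hb, rfl⟩ := hPmem.1 (Finset.mem_sdiff.1 h).1
      rw [Sym2.mk_isDiag_iff]
      intro hEq
      have := hinj _ _ hEq
      omega
  · intro e he f hf hef v hve hvf
    rcases Finset.mem_union.1 he with he' | he' <;>
      rcases Finset.mem_union.1 hf with hf' | hf'
    · exact hM.2 e (Finset.mem_sdiff.1 he').1 f (Finset.mem_sdiff.1 hf').1
        hef v hve hvf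
    · obtain ⟨j, hj, rfl⟩ := hPmem.1 (Finset.mem_sdiff.1 hf').1
      rcases Sym2.mem_iff.1 hvf with rfl | rfl
      · exact (Finset.mem_sdiff.1 he').2
          (hinP e (Finset.mem_sdiff.1 he').1 j (by omega) hve)
      · exact (Finset.mem_sdiff.1 he').2
          (hinP e (Finset.mem_sdiff.1 he').1 (j+1) hj hve)
    · obtain ⟨j, hj, rfl⟩ := hPmem.1 (Finset.mem_sdiff.1 he').1
      rcases Sym2.mem_iff.1 hve with rfl | rfl
      · exact (Finset.mem_sdiff.1 hf').2
          (hinP f (Finset.mem_sdiff.1 hf').1 j (by omega) hvf)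
      · exact (Finset.mem_sdiff.1 hf').2
          (hinP f (Finset.mem_sdiff.1 hf').1 (j+1) hj hvf)
    · obtain ⟨i, hi, rfl⟩ := hPmem.1 (Finset.mem_sdiff.1 he').1
      obtain ⟨j, hj, rfl⟩ := hPmem.1 (Finset.mem_sdiff.1 hf').1
      have hiodd : ¬ Even i := fun h =>
        (Finset.mem_sdiff.1 he').2 ((hMiff i hi).2 h)
      have hjodd : ¬ Even j := fun h =>
        (Finset.mem_sdiff.1 hf').2 ((hMiff j hj).2 h)
      have hij : i ≠ j := by
        intro h; subst h; exact hef rfl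
      rw [Nat.not_even_iff] at hiodd hjodd
      rcases Sym2.mem_iff.1 hve with rfl | rfl
      · rcases Sym2.mem_iff.1 hvf with h2 | h2
        · have := hinj _ _ h2; omega
        · have := hinj _ _ h2; omega
      · rcases Sym2.mem_iff.1 hvf with h2 | h2
        · have := hinj _ _ h2; omega
        · have := hinj _ _ h2; omega
  · intro e he hue
    rcases Finset.mem_union.1 he with h | h
    · exact (Finset.mem_sdiff.1 h).2
        (hinP e (Finset.mem_sdiff.1 h).1 0 hlpos (h0.symm ▸ hue))
    · obtain ⟨j, hj, rfl⟩ := hPmem.1 (Finset.mem_sdiff.1 h).1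
      have hjodd : ¬ Even j := fun hh =>
        (Finset.mem_sdiff.1 h).2 ((hMiff j hj).2 hh)
      rw [Nat.not_even_iff] at hjodd
      rcases Sym2.mem_iff.1 hue with h2 | h2
      · have h3 : l[0]'hlpos = l[j]'(by omega) := by rw [h0]; exact h2
        have := hinj _ _ h3; omega
      · have h3 : l[0]'hlpos = l[j+1]'hj := by rw [h0]; exact h2
        have := hinj _ _ h3; omega
  · intro v hvB hvu
    by_cases hvl : v ∈ l
    · obtain ⟨p, hp, rfl⟩ := List.mem_iff_getElem.1 hvl
      have hp0 : p ≠ 0 := by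
        intro h; subst h; exact hvu h0
      rcases Nat.even_or_odd p with hpar | hpar
      · obtain ⟨i, rfl⟩ : ∃ i, p = i + 1 := ⟨p - 1, by omega⟩
        refine ⟨s(l[i]'(by omega), l[i+1]'hp), ?_, Sym2.mem_iff.2 (Or.inr rfl)⟩
        refine Finset.mem_union.2 (Or.inr (Finset.mem_sdiff.2
          ⟨hPmem.2 ⟨i, hp, rfl⟩, ?_⟩))
        rw [hMiff i hp]
        rcases hpar with ⟨k, hk⟩
        rintro ⟨m, hm⟩
        omega
      · have hne' : p ≠ l.length - 1 := by
          intro h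
          rcases heven with ⟨k, hk⟩; rcases hpar with ⟨m, hm⟩; omega
        have hp1 : p + 1 < l.length := by omega
        refine ⟨s(l[p]'hp, l[p+1]'hp1), ?_, Sym2.mem_iff.2 (Or.inl rfl)⟩
        refine Finset.mem_union.2 (Or.inr (Finset.mem_sdiff.2
          ⟨hPmem.2 ⟨p, hp1, rfl⟩, ?_⟩))
        rw [hMiff p hp1]
        rcases hpar with ⟨k, hk⟩
        rintro ⟨m, hm⟩
        omega
    · have hvr : v ≠ r := by
        intro h; subst h
        exact hvl (hlast ▸ List.getElem_mem _)
      obtain ⟨e, he, hve⟩ := hcov v hvB hvr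
      refine ⟨e, Finset.mem_union.2 (Or.inl (Finset.mem_sdiff.2 ⟨he, ?_⟩)), hve⟩
      intro heP
      obtain ⟨i, hi, rfl⟩ := hPmem.1 heP
      rcases Sym2.mem_iff.1 hve with rfl | rfl
      · exact hvl (List.getElem_mem _)
      · exact hvl (List.getElem_mem _)

end Aux

/-- Receptacle rotation: in a cherry blossom the receptacle can be moved to any
node `u ∈ B`. -/
theorem cherry_blossom_receptacle_rotation
    {V : Type*} [DecidableEq V]
    (Eg : Finset (Sym2 V)) (hEg : ∀ e ∈ Eg, ¬ e.IsDiag)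
    (B : Finset V) (hodd : Odd B.card) (r : V) (hrB : r ∈ B)
    (M : Finset (Sym2 V)) (hM : IsMatchingS M) (hMEg : M ⊆ Eg)
    (hMB : ∀ e ∈ M, ∀ x : V, x ∈ e → x ∈ B)
    (hcard : 2 * M.card + 1 = B.card)
    (hrfree : ∀ e ∈ M, r ∉ e)
    (hcov : ∀ v ∈ B, v ≠ r → ∃ e ∈ M, v ∈ e)
    -- cherry blossom property: every node of `B \ {r}` has both an even and an odd
    -- alternating path to the receptacle `r` inside `B`
    (hcherry : ∀ v ∈ B, v ≠ r →
      EvenAltPathIn Eg M B v r ∧ OddAltPathIn Eg M B v r) :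
    ∀ u ∈ B, ∃ M' : Finset (Sym2 V),
      M' ⊆ Eg ∧ (∀ e ∈ M', ∀ x : V, x ∈ e → x ∈ B) ∧ IsMatchingS M' ∧
      2 * M'.card + 1 = B.card ∧
      (∀ e ∈ M', u ∉ e) ∧ (∀ v ∈ B, v ≠ u → ∃ e ∈ M', v ∈ e) := by
  intro u huB
  by_cases huR : u = r
  · subst huR
    exact ⟨M, hMEg, hMB, hM, hcard, hrfree, hcov⟩
  · obtain ⟨l, hap, hlB, hhead, hlast, hev⟩ := (hcherry u huB huR).1
    obtain ⟨M', h1, h2, h3, h4, h5⟩ :=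
      swap_lemma Eg B r M hM hMB hrfree hcov u huR l hap hlB hhead hlast hev
    have hEg' : M' ⊆ Eg := by
      refine h1.trans (Finset.union_subset hMEg ?_)
      intro e he
      exact hap.2.1 e (List.mem_toFinset.1 he)
    exact ⟨M', hEg', h2, h3,
      matching_card_of_cover M' B u huB h3 h2 h4 h5, h4, h5⟩
end

section
/- If the coefficients a_i, b_{ij}, c_{ij} are integers, then the linear program maximize ∑_i δ_i subject to δ_i ≥ 0, δ_i ≤ a_i, δ_i + δ_j ≤ b_{ij}, δ_i − δ_j ≤ c_{ij} has an optimal solution in which every δ_i is half-integral (i.e., 2δ_i ∈ ℤ). -/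
open Finset

/-- Feasibility for the dual-update LP: `δ ≥ 0`, `δ_i ≤ a_i` for `i ∈ SA`,
`δ_i + δ_j ≤ b_{ij}` for `(i,j) ∈ SB`, `δ_i − δ_j ≤ c_{ij}` for `(i,j) ∈ SC`. -/
def DeltaFeasible {k : ℕ} (SA : Finset (Fin k))
    (SB SC : Finset (Fin k × Fin k))
    (a : Fin k → ℤ) (b c : Fin k × Fin k → ℤ) (δ : Fin k → ℝ) : Prop :=
  (∀ i, 0 ≤ δ i) ∧ (∀ i ∈ SA, δ i ≤ (a i : ℝ)) ∧
  (∀ p ∈ SB, δ p.1 + δ p.2 ≤ (b p : ℝ)) ∧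
  (∀ p ∈ SC, δ p.1 - δ p.2 ≤ (c p : ℝ))

open Classical in
/-- The set of "bad" coordinates: those where `2 δ i` is not an integer. -/
noncomputable def BadSet {k : ℕ} (δ : Fin k → ℝ) : Finset (Fin k) :=
  Finset.univ.filter (fun i => ¬∃ z : ℤ, 2 * δ i = (z : ℝ))

lemma mem_BadSet {k : ℕ} (δ : Fin k → ℝ) (i : Fin k) :
    i ∈ BadSet δ ↔ ¬∃ z : ℤ, 2 * δ i = (z : ℝ) := by
  classical
  simp [BadSet]

/-- Moving a feasible point along a parity-consistent direction on the bad
coordinates, staying within the unit floor interval, preserves feasibility. -/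
lemma move_feasible {k : ℕ} (SA : Finset (Fin k)) (SB SC : Finset (Fin k × Fin k))
    (a : Fin k → ℤ) (b c : Fin k × Fin k → ℤ)
    (δ : Fin k → ℝ) (hδ : DeltaFeasible SA SB SC a b c δ)
    (d : Fin k → ℝ) (ε : ℝ) (hε : 0 ≤ ε)
    (hd0 : ∀ i, (∃ z : ℤ, 2 * δ i = (z : ℝ)) → d i = 0)
    (hd1 : ∀ i, ¬(∃ z : ℤ, 2 * δ i = (z : ℝ)) → d i = 1 ∨ d i = -1)
    (hpar : ∀ i j, ¬(∃ z : ℤ, 2 * δ i = (z : ℝ)) → ¬(∃ z : ℤ, 2 * δ j = (z : ℝ)) →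
      (d i = d j ↔ (Even ⌊2 * δ i⌋ ↔ Even ⌊2 * δ j⌋)))
    (hrange : ∀ i, ¬(∃ z : ℤ, 2 * δ i = (z : ℝ)) →
      ((⌊2 * δ i⌋ : ℝ) ≤ 2 * δ i + ε * d i ∧ 2 * δ i + ε * d i ≤ (⌊2 * δ i⌋ : ℝ) + 1)) :
    DeltaFeasible SA SB SC a b c (fun i => δ i + ε / 2 * d i) := by
  obtain ⟨h0, hA, hB, hC⟩ := hδ
  -- strict floor bounds at bad coordinates
  have hstrict : ∀ i, ¬(∃ z : ℤ, 2 * δ i = (z : ℝ)) →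
      ((⌊2 * δ i⌋ : ℝ) < 2 * δ i ∧ 2 * δ i < (⌊2 * δ i⌋ : ℝ) + 1) := by
    intro i hi
    refine ⟨lt_of_le_of_ne (Int.floor_le _) ?_, Int.lt_floor_add_one _⟩
    intro h
    exact hi ⟨⌊2 * δ i⌋, h.symm⟩
  refine ⟨?_, ?_, ?_, ?_⟩
  · -- nonnegativity
    intro i
    by_cases hi : ∃ z : ℤ, 2 * δ i = (z : ℝ)
    · have := hd0 i hi
      have := h0 i
      simp only []
      nlinarith
    · have hr := (hrange i hi).1
      have hfl : (0 : ℤ) ≤ ⌊2 * δ i⌋ := Int.floor_nonneg.2 (by nlinarith [h0 i])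
      have hfl' : (0 : ℝ) ≤ (⌊2 * δ i⌋ : ℝ) := by exact_mod_cast hfl
      simp only []
      nlinarith
  · -- upper bounds
    intro i hiA
    have hai := hA i hiA
    by_cases hi : ∃ z : ℤ, 2 * δ i = (z : ℝ)
    · have := hd0 i hi
      simp only []
      nlinarith
    · have hr := (hrange i hi).2
      have hs := (hstrict i hi).1
      -- ⌊2δi⌋ < 2 a i as integers
      have h1 : (⌊2 * δ i⌋ : ℝ) < 2 * (a i : ℝ) := by nlinarith
      have h2 : ⌊2 * δ i⌋ < 2 * a i := by exact_mod_cast h1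
      have h3 : ⌊2 * δ i⌋ + 1 ≤ 2 * a i := h2
      have h4 : (⌊2 * δ i⌋ : ℝ) + 1 ≤ 2 * (a i : ℝ) := by exact_mod_cast h3
      simp only []
      nlinarith
  · -- sum constraints
    intro p hp
    have hbp := hB p hp
    set i := p.1
    set j := p.2
    simp only []
    by_cases hi : ∃ z : ℤ, 2 * δ i = (z : ℝ) <;>
      by_cases hj : ∃ z : ℤ, 2 * δ j = (z : ℝ)
    · have di0 := hd0 i hi
      have dj0 := hd0 j hj
      nlinarith
    · obtain ⟨zi, hzi⟩ := hi
      have di0 := hd0 i ⟨zi, hzi⟩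
      have hrj := hrange j hj
      have hsj := hstrict j hj
      rcases hd1 j hj with dj | dj
      · -- j goes up: ⌊2δj⌋ + zi ≤ 2b - 1
        have h1 : (⌊2 * δ j⌋ : ℝ) + (zi : ℝ) < 2 * (b p : ℝ) := by nlinarith [hsj.1]
        have h2 : ⌊2 * δ j⌋ + zi < 2 * b p := by exact_mod_cast h1
        have h3 : (⌊2 * δ j⌋ : ℝ) + (zi : ℝ) + 1 ≤ 2 * (b p : ℝ) := by exact_mod_cast h2
        nlinarith [hrj.2]
      · nlinarith
    · obtain ⟨zj, hzj⟩ := hj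
      have dj0 := hd0 j ⟨zj, hzj⟩
      have hri := hrange i hi
      have hsi := hstrict i hi
      rcases hd1 i hi with di | di
      · have h1 : (⌊2 * δ i⌋ : ℝ) + (zj : ℝ) < 2 * (b p : ℝ) := by nlinarith [hsi.1]
        have h2 : ⌊2 * δ i⌋ + zj < 2 * b p := by exact_mod_cast h1
        have h3 : (⌊2 * δ i⌋ : ℝ) + (zj : ℝ) + 1 ≤ 2 * (b p : ℝ) := by exact_mod_cast h2
        nlinarith [hri.2]
      · nlinarith
    · have hri := hrange i hi
      have hrj := hrange j hj
      have hsi := hstrict i hi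
      have hsj := hstrict j hj
      rcases hd1 i hi with di | di <;> rcases hd1 j hj with dj | dj
      · -- both up: same parity
        have hsame : Even ⌊2 * δ i⌋ ↔ Even ⌊2 * δ j⌋ :=
          (hpar i j hi hj).1 (by rw [di, dj])
        have h1 : (⌊2 * δ i⌋ : ℝ) + (⌊2 * δ j⌋ : ℝ) < 2 * (b p : ℝ) := by
          nlinarith [hsi.1, hsj.1]
        have h2 : ⌊2 * δ i⌋ + ⌊2 * δ j⌋ < 2 * b p := by exact_mod_cast h1
        have h3 : ⌊2 * δ i⌋ + ⌊2 * δ j⌋ + 2 ≤ 2 * b p := by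
          rcases Int.even_or_odd ⌊2 * δ i⌋ with he | ho
          · have := hsame.1 he
            obtain ⟨m, hm⟩ := he
            obtain ⟨m', hm'⟩ := this
            omega
          · have ho' : ¬ Even ⌊2 * δ j⌋ := fun h => (Int.not_even_iff_odd.2 ho) (hsame.2 h)
            rw [Int.not_even_iff_odd] at ho'
            obtain ⟨m, hm⟩ := ho
            obtain ⟨m', hm'⟩ := ho'
            omega
        have h4 : (⌊2 * δ i⌋ : ℝ) + (⌊2 * δ j⌋ : ℝ) + 2 ≤ 2 * (b p : ℝ) := by exact_mod_cast h3
        nlinarith [hri.2, hrj.2]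
      · -- i up, j down: exact
        nlinarith
      · nlinarith
      · nlinarith
  · -- difference constraints
    intro p hp
    have hcp := hC p hp
    set i := p.1
    set j := p.2
    simp only []
    by_cases hi : ∃ z : ℤ, 2 * δ i = (z : ℝ) <;>
      by_cases hj : ∃ z : ℤ, 2 * δ j = (z : ℝ)
    · have di0 := hd0 i hi
      have dj0 := hd0 j hj
      nlinarith
    · obtain ⟨zi, hzi⟩ := hi
      have di0 := hd0 i ⟨zi, hzi⟩
      have hrj := hrange j hj
      have hsj := hstrict j hj
      rcases hd1 j hj with dj | dj
      · nlinarith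
      · -- j down: zi - ⌊2δj⌋ ≤ 2c
        have h1 : (zi : ℝ) - (⌊2 * δ j⌋ : ℝ) < 2 * (c p : ℝ) + 1 := by nlinarith [hsj.2]
        have h2 : zi - ⌊2 * δ j⌋ < 2 * c p + 1 := by exact_mod_cast h1
        have h3 : (zi : ℝ) - (⌊2 * δ j⌋ : ℝ) ≤ 2 * (c p : ℝ) := by
          have : zi - ⌊2 * δ j⌋ ≤ 2 * c p := by omega
          exact_mod_cast this
        nlinarith [hrj.1]
    · obtain ⟨zj, hzj⟩ := hj
      have dj0 := hd0 j ⟨zj, hzj⟩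
      have hri := hrange i hi
      have hsi := hstrict i hi
      rcases hd1 i hi with di | di
      · have h1 : (⌊2 * δ i⌋ : ℝ) - (zj : ℝ) < 2 * (c p : ℝ) := by nlinarith [hsi.1]
        have h2 : ⌊2 * δ i⌋ - zj < 2 * c p := by exact_mod_cast h1
        have h3 : (⌊2 * δ i⌋ : ℝ) - (zj : ℝ) + 1 ≤ 2 * (c p : ℝ) := by
          have : ⌊2 * δ i⌋ - zj + 1 ≤ 2 * c p := by omega
          exact_mod_cast this
        nlinarith [hri.2]
      · nlinarith
    · have hri := hrange i hi
      have hrj := hrange j hj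
      have hsi := hstrict i hi
      have hsj := hstrict j hj
      rcases hd1 i hi with di | di <;> rcases hd1 j hj with dj | dj
      · nlinarith
      · -- i up, j down: different parity
        have hdiff : ¬ (Even ⌊2 * δ i⌋ ↔ Even ⌊2 * δ j⌋) := by
          intro h
          have := (hpar i j hi hj).2 h
          rw [di, dj] at this
          norm_num at this
        have h1 : (⌊2 * δ i⌋ : ℝ) - (⌊2 * δ j⌋ : ℝ) < 2 * (c p : ℝ) + 1 := by
          nlinarith [hsi.1, hsj.2]
        have h2 : ⌊2 * δ i⌋ - ⌊2 * δ j⌋ < 2 * c p + 1 := by exact_mod_cast h1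
        have h3 : ⌊2 * δ i⌋ - ⌊2 * δ j⌋ + 2 ≤ 2 * c p + 1 := by
          rcases Int.even_or_odd ⌊2 * δ i⌋ with he | ho <;>
            rcases Int.even_or_odd ⌊2 * δ j⌋ with he' | ho'
          · exact absurd (iff_of_true he he') hdiff
          · obtain ⟨m, hm⟩ := he
            obtain ⟨m', hm'⟩ := ho'
            omega
          · obtain ⟨m, hm⟩ := ho
            obtain ⟨m', hm'⟩ := he'
            omega
          · exact absurd (iff_of_false (Int.not_even_iff_odd.2 ho) (Int.not_even_iff_odd.2 ho')) hdiff
        have h4 : (⌊2 * δ i⌋ : ℝ) - (⌊2 * δ j⌋ : ℝ) + 2 ≤ 2 * (c p : ℝ) + 1 := by exact_mod_cast h3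
        nlinarith [hri.2, hrj.1]
      · nlinarith
      · nlinarith

/-- One descent step: an optimal point with a bad coordinate can be improved to an
optimal point with strictly fewer bad coordinates. -/
lemma descent_step {k : ℕ} (SA : Finset (Fin k)) (SB SC : Finset (Fin k × Fin k))
    (a : Fin k → ℤ) (b c : Fin k × Fin k → ℤ)
    (δ : Fin k → ℝ) (hδ : DeltaFeasible SA SB SC a b c δ)
    (hopt : ∀ δ' : Fin k → ℝ, DeltaFeasible SA SB SC a b c δ' → ∑ i, δ' i ≤ ∑ i, δ i)
    (hbad : (BadSet δ).Nonempty) :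
    ∃ δ₂ : Fin k → ℝ, DeltaFeasible SA SB SC a b c δ₂ ∧ (∑ i, δ₂ i = ∑ i, δ i) ∧
      (BadSet δ₂).card < (BadSet δ).card := by
  classical
  set s : Fin k → ℝ := fun i =>
    if (∃ z : ℤ, 2 * δ i = (z : ℝ)) then 0 else (if Even ⌊2 * δ i⌋ then 1 else -1) with hs
  have hs0 : ∀ i, (∃ z : ℤ, 2 * δ i = (z : ℝ)) → s i = 0 := by
    intro i hi; simp [hs, hi]
  have hs1 : ∀ i, ¬(∃ z : ℤ, 2 * δ i = (z : ℝ)) → s i = 1 ∨ s i = -1 := by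
    intro i hi
    by_cases he : Even ⌊2 * δ i⌋ <;> simp [hs, hi, he]
  have hspar : ∀ i j, ¬(∃ z : ℤ, 2 * δ i = (z : ℝ)) → ¬(∃ z : ℤ, 2 * δ j = (z : ℝ)) →
      (s i = s j ↔ (Even ⌊2 * δ i⌋ ↔ Even ⌊2 * δ j⌋)) := by
    intro i j hi hj
    by_cases hei : Even ⌊2 * δ i⌋ <;> by_cases hej : Even ⌊2 * δ j⌋ <;>
      simp [hs, hi, hj, hei, hej] <;> norm_num
  have hstrict : ∀ i, i ∈ BadSet δ →
      ((⌊2 * δ i⌋ : ℝ) < 2 * δ i ∧ 2 * δ i < (⌊2 * δ i⌋ : ℝ) + 1) := by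
    intro i hi
    rw [mem_BadSet] at hi
    refine ⟨lt_of_le_of_ne (Int.floor_le _) ?_, Int.lt_floor_add_one _⟩
    exact fun h => hi ⟨⌊2 * δ i⌋, h.symm⟩
  -- room upward / downward
  set g1 : Fin k → ℝ := fun i =>
    if Even ⌊2 * δ i⌋ then ((⌊2 * δ i⌋ : ℝ) + 1 - 2 * δ i) else (2 * δ i - (⌊2 * δ i⌋ : ℝ))
    with hg1
  set g2 : Fin k → ℝ := fun i =>
    if Even ⌊2 * δ i⌋ then (2 * δ i - (⌊2 * δ i⌋ : ℝ)) else ((⌊2 * δ i⌋ : ℝ) + 1 - 2 * δ i)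
    with hg2
  set ε₁ : ℝ := (BadSet δ).inf' hbad g1 with hε₁
  set ε₂ : ℝ := (BadSet δ).inf' hbad g2 with hε₂
  have hε₁pos : 0 < ε₁ := by
    rw [hε₁, Finset.lt_inf'_iff]
    intro i hi
    have hst := hstrict i hi
    by_cases he : Even ⌊2 * δ i⌋
    · rw [hg1]; simp only []; rw [if_pos he]; linarith [hst.2]
    · rw [hg1]; simp only []; rw [if_neg he]; linarith [hst.1]
  have hε₂pos : 0 < ε₂ := by
    rw [hε₂, Finset.lt_inf'_iff]
    intro i hi
    have hst := hstrict i hi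
    by_cases he : Even ⌊2 * δ i⌋
    · rw [hg2]; simp only []; rw [if_pos he]; linarith [hst.1]
    · rw [hg2]; simp only []; rw [if_neg he]; linarith [hst.2]
  -- range hypothesis for direction s with step ε ≤ ε₁
  have hrange_s : ∀ ε : ℝ, 0 ≤ ε → ε ≤ ε₁ → ∀ i, ¬(∃ z : ℤ, 2 * δ i = (z : ℝ)) →
      ((⌊2 * δ i⌋ : ℝ) ≤ 2 * δ i + ε * s i ∧ 2 * δ i + ε * s i ≤ (⌊2 * δ i⌋ : ℝ) + 1) := by
    intro ε hε hεle i hi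
    have hmem : i ∈ BadSet δ := (mem_BadSet δ i).2 hi
    have hg : ε₁ ≤ g1 i := Finset.inf'_le _ hmem
    have hst := hstrict i hmem
    by_cases he : Even ⌊2 * δ i⌋
    · have hsi : s i = 1 := by simp [hs, hi, he]
      have hgv : g1 i = (⌊2 * δ i⌋ : ℝ) + 1 - 2 * δ i := by
        rw [hg1]; simp only []; rw [if_pos he]
      rw [hsi]; rw [hgv] at hg
      constructor <;> nlinarith [hst.1, hst.2]
    · have hsi : s i = -1 := by simp [hs, hi, he]
      have hgv : g1 i = 2 * δ i - (⌊2 * δ i⌋ : ℝ) := by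
        rw [hg1]; simp only []; rw [if_neg he]
      rw [hsi]; rw [hgv] at hg
      constructor <;> nlinarith [hst.1, hst.2]
  have hrange_ms : ∀ ε : ℝ, 0 ≤ ε → ε ≤ ε₂ → ∀ i, ¬(∃ z : ℤ, 2 * δ i = (z : ℝ)) →
      ((⌊2 * δ i⌋ : ℝ) ≤ 2 * δ i + ε * (-(s i)) ∧
        2 * δ i + ε * (-(s i)) ≤ (⌊2 * δ i⌋ : ℝ) + 1) := by
    intro ε hε hεle i hi
    have hmem : i ∈ BadSet δ := (mem_BadSet δ i).2 hi
    have hg : ε₂ ≤ g2 i := Finset.inf'_le _ hmem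
    have hst := hstrict i hmem
    by_cases he : Even ⌊2 * δ i⌋
    · have hsi : s i = 1 := by simp [hs, hi, he]
      have hgv : g2 i = 2 * δ i - (⌊2 * δ i⌋ : ℝ) := by
        rw [hg2]; simp only []; rw [if_pos he]
      rw [hsi]; rw [hgv] at hg
      constructor <;> nlinarith [hst.1, hst.2]
    · have hsi : s i = -1 := by simp [hs, hi, he]
      have hgv : g2 i = (⌊2 * δ i⌋ : ℝ) + 1 - 2 * δ i := by
        rw [hg2]; simp only []; rw [if_neg he]
      rw [hsi]; rw [hgv] at hg
      constructor <;> nlinarith [hst.1, hst.2]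
  -- the two perturbed points
  have hfeas_plus : DeltaFeasible SA SB SC a b c (fun i => δ i + ε₁ / 2 * s i) :=
    move_feasible SA SB SC a b c δ hδ s ε₁ (le_of_lt hε₁pos) hs0 hs1 hspar
      (hrange_s ε₁ (le_of_lt hε₁pos) le_rfl)
  have hms0 : ∀ i, (∃ z : ℤ, 2 * δ i = (z : ℝ)) → -(s i) = 0 := by
    intro i hi; rw [hs0 i hi]; ring
  have hms1 : ∀ i, ¬(∃ z : ℤ, 2 * δ i = (z : ℝ)) → -(s i) = 1 ∨ -(s i) = -1 := by
    intro i hi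
    rcases hs1 i hi with h | h <;> rw [h] <;> norm_num
  have hmspar : ∀ i j, ¬(∃ z : ℤ, 2 * δ i = (z : ℝ)) → ¬(∃ z : ℤ, 2 * δ j = (z : ℝ)) →
      (-(s i) = -(s j) ↔ (Even ⌊2 * δ i⌋ ↔ Even ⌊2 * δ j⌋)) := by
    intro i j hi hj
    rw [neg_inj]
    exact hspar i j hi hj
  have hfeas_minus : DeltaFeasible SA SB SC a b c (fun i => δ i + ε₂ / 2 * (-(s i))) :=
    move_feasible SA SB SC a b c δ hδ (fun i => -(s i)) ε₂ (le_of_lt hε₂pos) hms0 hms1 hmspar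
      (hrange_ms ε₂ (le_of_lt hε₂pos) le_rfl)
  -- the sum of s vanishes by optimality
  have hsum_plus : ∑ i, (δ i + ε₁ / 2 * s i) = (∑ i, δ i) + ε₁ / 2 * ∑ i, s i := by
    rw [Finset.sum_add_distrib, Finset.mul_sum]
  have hsum_minus : ∑ i, (δ i + ε₂ / 2 * (-(s i))) = (∑ i, δ i) - ε₂ / 2 * ∑ i, s i := by
    rw [Finset.sum_add_distrib]
    have hneg : (∑ i, ε₂ / 2 * (-(s i))) = -(ε₂ / 2 * ∑ i, s i) :=
      calc (∑ i, ε₂ / 2 * (-(s i))) = ∑ i, -(ε₂ / 2 * s i) :=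
            Finset.sum_congr rfl (fun i _ => by ring)
        _ = -∑ i, ε₂ / 2 * s i := by rw [Finset.sum_neg_distrib]
        _ = -(ε₂ / 2 * ∑ i, s i) := by rw [Finset.mul_sum]
    rw [hneg]; ring
  have h1 := hopt _ hfeas_plus
  have h2 := hopt _ hfeas_minus
  rw [hsum_plus] at h1
  rw [hsum_minus] at h2
  have hsz : ∑ i, s i = 0 := by nlinarith
  -- the witness coordinate that becomes half-integral
  obtain ⟨i₀, hi₀mem, hi₀⟩ := Finset.exists_mem_eq_inf' hbad g1
  rw [← hε₁] at hi₀
  refine ⟨fun i => δ i + ε₁ / 2 * s i, hfeas_plus, by rw [hsum_plus, hsz]; ring, ?_⟩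
  have hsub : BadSet (fun i => δ i + ε₁ / 2 * s i) ⊆ BadSet δ := by
    intro i hi
    rw [mem_BadSet] at hi ⊢
    intro hgood
    apply hi
    obtain ⟨z, hz⟩ := hgood
    refine ⟨z, ?_⟩
    have := hs0 i ⟨z, hz⟩
    simp only [this]
    rw [← hz]; ring
  have hi₀good : i₀ ∉ BadSet (fun i => δ i + ε₁ / 2 * s i) := by
    rw [mem_BadSet, not_not]
    have hi₀bad : ¬(∃ z : ℤ, 2 * δ i₀ = (z : ℝ)) := (mem_BadSet δ i₀).1 hi₀mem
    by_cases he : Even ⌊2 * δ i₀⌋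
    · have hsi : s i₀ = 1 := by simp [hs, hi₀bad, he]
      refine ⟨⌊2 * δ i₀⌋ + 1, ?_⟩
      have : ε₁ = (⌊2 * δ i₀⌋ : ℝ) + 1 - 2 * δ i₀ := by
        rw [hi₀, hg1]; simp only []; rw [if_pos he]
      push_cast
      rw [hsi, this]; ring
    · have hsi : s i₀ = -1 := by simp [hs, hi₀bad, he]
      refine ⟨⌊2 * δ i₀⌋, ?_⟩
      have : ε₁ = 2 * δ i₀ - (⌊2 * δ i₀⌋ : ℝ) := by
        rw [hi₀, hg1]; simp only []; rw [if_neg he]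
      rw [hsi, this]; ring
  exact Finset.card_lt_card ((Finset.ssubset_iff_of_subset hsub).2 ⟨i₀, hi₀mem, hi₀good⟩)

/-- If the `BadSet` is empty, every coordinate is half-integral. -/
lemma halfint_of_badset_empty {k : ℕ} (δ : Fin k → ℝ) (h : BadSet δ = ∅) :
    ∀ i, ∃ z : ℤ, 2 * δ i = (z : ℝ) := by
  intro i
  by_contra hc
  have : i ∈ BadSet δ := (mem_BadSet δ i).2 hc
  rw [h] at this
  exact absurd this (Finset.notMem_empty i)

/-- Iterated descent: from any optimal point we reach a half-integral optimal point. -/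
lemma descend {k : ℕ} (SA : Finset (Fin k)) (SB SC : Finset (Fin k × Fin k))
    (a : Fin k → ℤ) (b c : Fin k × Fin k → ℤ) :
    ∀ N : ℕ, ∀ δ : Fin k → ℝ, DeltaFeasible SA SB SC a b c δ →
    (∀ δ' : Fin k → ℝ, DeltaFeasible SA SB SC a b c δ' → ∑ i, δ' i ≤ ∑ i, δ i) →
    (BadSet δ).card ≤ N →
    ∃ δ₂ : Fin k → ℝ, DeltaFeasible SA SB SC a b c δ₂ ∧
      (∀ δ' : Fin k → ℝ, DeltaFeasible SA SB SC a b c δ' → ∑ i, δ' i ≤ ∑ i, δ₂ i) ∧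
      (∀ i, ∃ z : ℤ, 2 * δ₂ i = (z : ℝ)) := by
  intro N
  induction N with
  | zero =>
    intro δ hf ho hc
    exact ⟨δ, hf, ho,
      halfint_of_badset_empty δ (Finset.card_eq_zero.1 (Nat.le_zero.1 hc))⟩
  | succ N ih =>
    intro δ hf ho hc
    rcases Finset.eq_empty_or_nonempty (BadSet δ) with he | hne
    · exact ⟨δ, hf, ho, halfint_of_badset_empty δ he⟩
    · obtain ⟨δ₂, hf₂, hsum₂, hcard₂⟩ := descent_step SA SB SC a b c δ hf ho hne
      have ho₂ : ∀ δ' : Fin k → ℝ, DeltaFeasible SA SB SC a b c δ' →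
          ∑ i, δ' i ≤ ∑ i, δ₂ i := by
        intro δ' hδ'
        rw [hsum₂]
        exact ho δ' hδ'
      exact ih δ₂ hf₂ ho₂ (by omega)

/-- The dual-update LP with integer coefficients has a half-integral optimal
solution. -/
theorem dual_update_LP_half_integral_optimum
    {k : ℕ} (SA : Finset (Fin k)) (SB SC : Finset (Fin k × Fin k))
    (a : Fin k → ℤ) (b c : Fin k × Fin k → ℤ)
    -- the feasible region is nonempty (it contains 0)
    (hne : DeltaFeasible SA SB SC a b c (fun _ => 0))
    -- and bounded
    (hbdd : ∃ R : ℝ, ∀ δ : Fin k → ℝ,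
      DeltaFeasible SA SB SC a b c δ → ∀ i, δ i ≤ R) :
    ∃ δ : Fin k → ℝ, DeltaFeasible SA SB SC a b c δ ∧
      (∀ δ' : Fin k → ℝ, DeltaFeasible SA SB SC a b c δ' →
        ∑ i, δ' i ≤ ∑ i, δ i) ∧
      (∀ i, ∃ z : ℤ, 2 * δ i = (z : ℝ)) := by
  classical
  obtain ⟨R, hR⟩ := hbdd
  set K : Set (Fin k → ℝ) := {δ | DeltaFeasible SA SB SC a b c δ} with hK
  have hKne : K.Nonempty := ⟨_, hne⟩
  have hKclosed : IsClosed K := by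
    have hKeq : K = {δ : Fin k → ℝ | ∀ i, 0 ≤ δ i} ∩
        ({δ : Fin k → ℝ | ∀ i ∈ SA, δ i ≤ (a i : ℝ)} ∩
          ({δ : Fin k → ℝ | ∀ p ∈ SB, δ p.1 + δ p.2 ≤ (b p : ℝ)} ∩
            {δ : Fin k → ℝ | ∀ p ∈ SC, δ p.1 - δ p.2 ≤ (c p : ℝ)})) := by
      ext δ
      simp only [hK, Set.mem_setOf_eq, Set.mem_inter_iff, DeltaFeasible]
    rw [hKeq]
    refine IsClosed.inter ?_ (IsClosed.inter ?_ (IsClosed.inter ?_ ?_))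
    · have : {δ : Fin k → ℝ | ∀ i, 0 ≤ δ i} = ⋂ i, {δ : Fin k → ℝ | 0 ≤ δ i} := by
        ext δ; simp [Set.mem_iInter]
      rw [this]
      exact isClosed_iInter fun i => isClosed_le continuous_const (continuous_apply i)
    · have : {δ : Fin k → ℝ | ∀ i ∈ SA, δ i ≤ (a i : ℝ)} =
          ⋂ i ∈ SA, {δ : Fin k → ℝ | δ i ≤ (a i : ℝ)} := by
        ext δ; simp [Set.mem_iInter]
      rw [this]
      exact isClosed_biInter fun i _ => isClosed_le (continuous_apply i) continuous_const
    · have : {δ : Fin k → ℝ | ∀ p ∈ SB, δ p.1 + δ p.2 ≤ (b p : ℝ)} =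
          ⋂ p ∈ SB, {δ : Fin k → ℝ | δ p.1 + δ p.2 ≤ (b p : ℝ)} := by
        ext δ; simp [Set.mem_iInter]
      rw [this]
      exact isClosed_biInter fun p _ =>
        isClosed_le ((continuous_apply p.1).add (continuous_apply p.2)) continuous_const
    · have : {δ : Fin k → ℝ | ∀ p ∈ SC, δ p.1 - δ p.2 ≤ (c p : ℝ)} =
          ⋂ p ∈ SC, {δ : Fin k → ℝ | δ p.1 - δ p.2 ≤ (c p : ℝ)} := by
        ext δ; simp [Set.mem_iInter]
      rw [this]
      exact isClosed_biInter fun p _ =>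
        isClosed_le ((continuous_apply p.1).sub (continuous_apply p.2)) continuous_const
  have hKcpt : IsCompact K := by
    have hbox : IsCompact (Set.pi Set.univ fun _ : Fin k => Set.Icc (0 : ℝ) R) :=
      isCompact_univ_pi fun _ => isCompact_Icc
    refine hbox.of_isClosed_subset hKclosed ?_
    intro δ hδ
    rw [Set.mem_univ_pi]
    exact fun i => ⟨hδ.1 i, hR δ hδ i⟩
  have hcont : ContinuousOn (fun δ : Fin k → ℝ => ∑ i, δ i) K :=
    (continuous_finset_sum _ fun i _ => continuous_apply i).continuousOn
  obtain ⟨δ₀, hδ₀K, hmax⟩ := hKcpt.exists_isMaxOn hKne hcont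
  have hopt : ∀ δ' : Fin k → ℝ, DeltaFeasible SA SB SC a b c δ' →
      ∑ i, δ' i ≤ ∑ i, δ₀ i := fun δ' hδ' => hmax hδ'
  exact descend SA SB SC a b c (BadSet δ₀).card δ₀ hδ₀K hopt le_rfl
end
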